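/- arXiv:1205.6961 — 5 statements merged into one kernel-verified Lean document; each statement's English description precedes it below -/
import Mathlib

section
/- Let G be a finite simple undirected graph on n vertices and let P be a shortest path between two vertices u and v. Then the sum of the degrees of the vertices on P is at most 3n. -/
section Aux

variable {V : Type*} [Fintype V] [DecidableEq V] (G : SimpleGraph V) [DecidableRel G.Adj]

/-- On a shortest path, the distance from the start to a vertex `x` on the path equals
the length of the path up to `x`. -/
lemma aux_dist_takeUntil {u v : V} (p : G.Walk u v) (hshort : p.length = G.dist u v)
    {x : V} (hx : x ∈ p.support) : G.dist u x = (p.takeUntil x hx).length := by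
  refine le_antisymm (SimpleGraph.dist_le _) ?_
  by_contra hlt
  push_neg at hlt
  obtain ⟨q, hq⟩ := (SimpleGraph.Walk.reachable (p.takeUntil x hx)).exists_walk_length_eq_dist
  have h2 : G.dist u v ≤ (q.append (p.dropUntil x hx)).length := SimpleGraph.dist_le _
  rw [SimpleGraph.Walk.length_append, hq] at h2
  have h3 : (p.takeUntil x hx).length + (p.dropUntil x hx).length = p.length := by
    have := congr_arg SimpleGraph.Walk.length (p.take_spec hx)
    rwa [SimpleGraph.Walk.length_append] at this
  omega

lemma aux_getVert_append {u x v : V} (q : G.Walk u x) (r : G.Walk x v) :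
    (q.append r).getVert q.length = x := by
  rw [SimpleGraph.Walk.getVert_append]
  simp [SimpleGraph.Walk.getVert_zero]

lemma aux_getVert {u v : V} (p : G.Walk u v) {x : V} (hx : x ∈ p.support) :
    p.getVert (p.takeUntil x hx).length = x := by
  have h := aux_getVert_append G (p.takeUntil x hx) (p.dropUntil x hx)
  rwa [p.take_spec hx] at h

end Aux

/-- On a shortest path in a finite simple graph on `n` vertices, the sum of the
degrees of the vertices of the path is at most `3 * n`. -/
theorem shortest_path_degree_sum {V : Type*} [Fintype V] [DecidableEq V]
    (G : SimpleGraph V) [DecidableRel G.Adj] {u v : V}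
    (p : G.Walk u v) (hshort : p.length = G.dist u v) :
    (p.support.map (fun w => G.degree w)).sum ≤ 3 * Fintype.card V := by
  classical
  have hpath : p.IsPath := p.isPath_of_length_eq_dist hshort
  have hnodup : p.support.Nodup := hpath.support_nodup
  set T : Finset V := p.support.toFinset with hT
  -- rewrite list sum as finset sum
  have hsum : (p.support.map (fun w => G.degree w)).sum = ∑ x ∈ T, G.degree x :=
    (List.sum_toFinset _ hnodup).symm
  rw [hsum]
  -- injectivity of dist u · on the support
  have hinj : ∀ x ∈ T, ∀ y ∈ T, G.dist u x = G.dist u y → x = y := by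
    intro x hx y hy hxy
    rw [hT, List.mem_toFinset] at hx hy
    rw [aux_dist_takeUntil G p hshort hx, aux_dist_takeUntil G p hshort hy] at hxy
    have := aux_getVert G p hx
    rw [hxy, aux_getVert G p hy] at this
    exact this.symm
  -- each vertex w is adjacent to at most 3 vertices of the support
  have hkey : ∀ w : V, (T.filter (fun x => G.Adj w x)).card ≤ 3 := by
    intro w
    set S := T.filter (fun x => G.Adj w x) with hS
    rcases S.eq_empty_or_nonempty with hemp | hne
    · simp [hemp]
    obtain ⟨x0, hx0, hx0min⟩ := S.exists_min_image (fun x => G.dist u x) hne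
    have hmemT : ∀ x ∈ S, x ∈ p.support := by
      intro x hxS
      rw [hS, Finset.mem_filter] at hxS
      exact List.mem_toFinset.mp hxS.1
    -- distances are within a window of size 2
    have hwin : ∀ x ∈ S, ∀ y ∈ S, G.dist u y ≤ G.dist u x + 2 := by
      intro x hxS y hyS
      have hx : x ∈ p.support := hmemT x hxS
      have hax : G.Adj w x := (Finset.mem_filter.mp hxS).2
      have hay : G.Adj w y := (Finset.mem_filter.mp hyS).2
      have hle := SimpleGraph.dist_le ((p.takeUntil x hx).append
        (SimpleGraph.Walk.cons hax.symm (SimpleGraph.Walk.cons hay SimpleGraph.Walk.nil)))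
      simp only [SimpleGraph.Walk.length_append, SimpleGraph.Walk.length_cons,
        SimpleGraph.Walk.length_nil] at hle
      rw [← aux_dist_takeUntil G p hshort hx] at hle
      omega
    -- the image of S under dist u is injective and lies in an interval of 3 naturals
    have hcard : S.card = (S.image (fun x => G.dist u x)).card := by
      rw [Finset.card_image_of_injOn]
      intro x hx y hy hxy
      exact hinj x (Finset.mem_filter.mp hx).1 y (Finset.mem_filter.mp hy).1 hxy
    rw [hcard]
    have hsub : S.image (fun x => G.dist u x) ⊆
        Finset.Icc (G.dist u x0) (G.dist u x0 + 2) := by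
      intro n hn
      obtain ⟨y, hyS, rfl⟩ := Finset.mem_image.mp hn
      have h1 := hwin x0 hx0 y hyS
      have h2 := hx0min y hyS
      simp only [Finset.mem_Icc]
      omega
    calc (S.image (fun x => G.dist u x)).card
        ≤ (Finset.Icc (G.dist u x0) (G.dist u x0 + 2)).card := Finset.card_le_card hsub
      _ ≤ 3 := by rw [Nat.card_Icc]; omega
  -- swap the order of summation
  have hswap : ∑ x ∈ T, G.degree x
      = ∑ w : V, (T.filter (fun x => G.Adj w x)).card := by
    have hdeg : ∀ x, G.degree x = ∑ w : V, (if G.Adj w x then 1 else 0) := by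
      intro x
      rw [← SimpleGraph.card_neighborFinset_eq_degree]
      have hnb : G.neighborFinset x = Finset.univ.filter (fun w => G.Adj w x) := by
        ext w
        simp [G.adj_comm]
      rw [hnb, Finset.card_filter]
    simp_rw [hdeg, Finset.card_filter]
    exact Finset.sum_comm
  rw [hswap]
  calc ∑ w : V, (T.filter (fun x => G.Adj w x)).card
      ≤ ∑ _w : V, 3 := Finset.sum_le_sum (fun w _ => hkey w)
    _ = 3 * Fintype.card V := by simp [mul_comm]
end

section
/- Let X_1, ..., X_m be independent Bernoulli random variables, each with success probability at least p = 1/(2Δ) for some integer Δ ≥ 1, and let m = 16Δ(D + k + log₂ n) for positive integers D, k, n. Then the probability that ∑ X_i < D is at most 2^{-(k + 2 log₂ n)}. -/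
open MeasureTheory ProbabilityTheory

lemma bernoulli_exp_eq (t : ℝ) (x : ℝ) (hx : x = 0 ∨ x = 1) :
    Real.exp (t * x) = 1 + (Real.exp t - 1) * x := by
  rcases hx with h | h <;> simp [h]

/-- Chernoff bound step: `m = 16Δ(D + k + log₂ n)` independent Bernoulli trials
with success probability at least `1/(2Δ)` produce fewer than `D` successes with
probability at most `2^{-(k + 2 log₂ n)}`. -/
theorem chernoff_gossip_step {Ω : Type*} [MeasurableSpace Ω]
    (P : Measure Ω) [IsProbabilityMeasure P]
    (m Δ D k n : ℕ) (hΔ : 1 ≤ Δ) (hD : 0 < D) (hk : 0 < k) (hn : 0 < n)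
    (hm : (m : ℝ) = 16 * Δ * (D + k + Real.logb 2 n))
    (X : Fin m → Ω → ℝ) (hmeas : ∀ i, Measurable (X i))
    (hind : iIndepFun X P)
    (hBer : ∀ i ω, X i ω = 0 ∨ X i ω = 1)
    (hp : ∀ i, (1 : ℝ) / (2 * Δ) ≤ (P {ω | X i ω = 1}).toReal) :
    (P {ω | ∑ i, X i ω < D}).toReal ≤ (2 : ℝ) ^ (-((k : ℝ) + 2 * Real.logb 2 n)) := by
  set t : ℝ := -Real.log 2 with ht_def
  have htneg : t ≤ 0 := neg_nonpos.mpr (Real.log_nonneg one_le_two)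
  have hexpt : Real.exp t = 1 / 2 := by
    rw [ht_def, Real.exp_neg, Real.exp_log] <;> norm_num
  -- each X i as indicator
  have hX_ind : ∀ i, X i = Set.indicator {ω | X i ω = 1} (fun _ => (1 : ℝ)) := by
    intro i
    funext ω
    rcases hBer i ω with h | h
    · rw [h, Set.indicator_of_notMem]
      simp [Set.mem_setOf_eq, h]
    · rw [h, Set.indicator_of_mem]
      exact h
  have hs_meas : ∀ i, MeasurableSet {ω | X i ω = 1} := fun i =>
    (hmeas i) (measurableSet_singleton 1)
  -- integrability of X i
  have hX_int : ∀ i, Integrable (X i) P := by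
    intro i
    rw [hX_ind i]
    exact (integrable_const (1 : ℝ)).indicator (hs_meas i)
  -- integral of X i
  have hX_integral : ∀ i, ∫ ω, X i ω ∂P = (P {ω | X i ω = 1}).toReal := by
    intro i
    conv_lhs => rw [hX_ind i]
    rw [MeasureTheory.integral_indicator_const (1 : ℝ) (hs_meas i)]
    simp [Measure.real]
  -- integrability of exp (t * X i)
  have hexp_eq : ∀ i, (fun ω => Real.exp (t * X i ω))
      = fun ω => 1 + (Real.exp t - 1) * X i ω := by
    intro i; funext ω; exact bernoulli_exp_eq t (X i ω) (hBer i ω)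
  have hexp_int : ∀ i, Integrable (fun ω => Real.exp (t * X i ω)) P := by
    intro i
    rw [hexp_eq i]
    exact (integrable_const (1 : ℝ)).add ((hX_int i).const_mul _)
  -- mgf of each X i
  have hmgf_i : ∀ i, mgf (X i) P t = 1 - (P {ω | X i ω = 1}).toReal / 2 := by
    intro i
    rw [mgf, hexp_eq i, integral_add (integrable_const _) ((hX_int i).const_mul _),
      integral_const, integral_const_mul, hX_integral i, hexpt]
    simp; ring
  set p : ℝ := 1 / (2 * Δ) with hp_def
  have hΔpos : (0 : ℝ) < Δ := by exact_mod_cast hΔ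
  have hppos : 0 < p := by positivity
  have hmgf_le : ∀ i, mgf (X i) P t ≤ Real.exp (-(p / 2)) := by
    intro i
    rw [hmgf_i i]
    have h1 : 1 - (P {ω | X i ω = 1}).toReal / 2 ≤ 1 - p / 2 := by
      have := hp i; linarith
    have h2 : 1 - p / 2 ≤ Real.exp (-(p / 2)) := by
      have := Real.add_one_le_exp (-(p / 2)); linarith
    linarith
  -- Chernoff
  set L : ℝ := (D : ℝ) + k + Real.logb 2 n with hL_def
  have hg0 : 0 ≤ Real.logb 2 n :=
    Real.logb_nonneg one_lt_two (by exact_mod_cast hn)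
  have hLpos : 0 < L := by
    have : (1 : ℝ) ≤ D := by exact_mod_cast hD
    have : (1 : ℝ) ≤ k := by exact_mod_cast hk
    simp only [hL_def]; positivity
  have hsum : (fun ω => ∑ i, X i ω) = ∑ i, X i := by
    funext ω; simp
  have hint_sum : Integrable (fun ω => Real.exp (t * (∑ i, X i) ω)) P :=
    hind.integrable_exp_mul_sum hmeas (fun i _ => hexp_int i)
  have hch := measure_le_le_exp_mul_mgf (μ := P) (X := ∑ i, X i) (t := t)
      (D : ℝ) htneg hint_sum
  have hmono : (P {ω | ∑ i, X i ω < D}).toReal ≤ (P {ω | (∑ i, X i) ω ≤ (D : ℝ)}).toReal := by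
    apply ENNReal.toReal_mono (measure_ne_top _ _)
    apply measure_mono
    intro ω hω
    simp only [Set.mem_setOf_eq] at *
    rw [Finset.sum_apply]
    exact le_of_lt hω
  refine hmono.trans (hch.trans ?_)
  -- bound mgf of sum
  have hmgf_sum : mgf (∑ i, X i) P t ≤ Real.exp (-(p / 2)) ^ m := by
    rw [hind.mgf_sum hmeas]
    calc ∏ i, mgf (X i) P t ≤ ∏ _i : Fin m, Real.exp (-(p / 2)) :=
          Finset.prod_le_prod (fun i _ => mgf_nonneg) (fun i _ => hmgf_le i)
      _ = Real.exp (-(p / 2)) ^ m := by simp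
  have hpow : Real.exp (-(p / 2)) ^ m = Real.exp (-(p / 2) * m) := by
    rw [← Real.exp_nat_mul]; ring_nf
  have hpm : -(p / 2) * m = -(4 * L) := by
    rw [hp_def, hm, hL_def]
    field_simp
    ring
  have h1 : Real.exp (-t * D) * mgf (∑ i, X i) P t
      ≤ Real.exp (-t * D) * Real.exp (-(4 * L)) := by
    have := hmgf_sum
    rw [hpow, hpm] at this
    exact mul_le_mul_of_nonneg_left this (Real.exp_pos _).le
  refine h1.trans ?_
  rw [← Real.exp_add]
  rw [Real.rpow_def_of_pos (by norm_num : (0:ℝ) < 2)]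
  apply Real.exp_le_exp.mpr
  have hlog2 : Real.log 2 ≤ 1 := by
    have := Real.log_le_sub_one_of_pos (by norm_num : (0:ℝ) < 2)
    linarith
  have hlog2pos : 0 < Real.log 2 := Real.log_pos one_lt_two
  have hDt : -t * D = Real.log 2 * D := by rw [ht_def]; ring
  rw [hDt]
  have hD1 : (0 : ℝ) ≤ D := by positivity
  have hk1 : (0 : ℝ) ≤ k := by positivity
  have h1 : Real.log 2 * (D : ℝ) ≤ 1 * (D : ℝ) := mul_le_mul_of_nonneg_right hlog2 hD1
  have h2 : Real.log 2 * (k : ℝ) ≤ 1 * (k : ℝ) := mul_le_mul_of_nonneg_right hlog2 hk1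
  have h3 : Real.logb 2 n * Real.log 2 ≤ Real.logb 2 n * 1 :=
    mul_le_mul_of_nonneg_left hlog2 hg0
  have hlogb : Real.logb 2 n * Real.log 2 = Real.log n := by
    rw [Real.logb, div_mul_cancel₀]
    exact hlog2pos.ne'
  have expand : Real.log 2 * (-((k : ℝ) + 2 * Real.logb 2 n))
      = -(Real.log 2 * k) - 2 * (Real.logb 2 n * Real.log 2) := by ring
  rw [expand]
  simp only [hL_def]
  linarith
end

section
/- In a graph G, define a weighted distance dist(u,v) as the minimum over all u–v paths P of ∑_{w ∈ P, w ≠ v} deg(w). Then for all u, v in a connected graph on n vertices with maximum degree Δ and diameter D, dist(u,v) ≤ min{3n, ΔD}. -/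
open SimpleGraph Finset

noncomputable def weightedDist {V : Type*} [Fintype V]
    (G : SimpleGraph V) [DecidableRel G.Adj] (u v : V) : ℕ :=
  sInf {m | ∃ p : G.Walk u v, p.IsPath ∧
    (p.support.dropLast.map fun w => G.degree w).sum = m}

private lemma dist_getVert_le' {V : Type*} {G : SimpleGraph V} (hconn : G.Connected)
    {u v : V} (p : G.Walk u v) : ∀ i, i ≤ p.length → G.dist u (p.getVert i) ≤ i := by
  intro i
  induction i with
  | zero => simp
  | succ i ih =>
    intro hi
    have h1 : G.Adj (p.getVert i) (p.getVert (i + 1)) := p.adj_getVert_succ (by omega)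
    have h2 : G.dist (p.getVert i) (p.getVert (i + 1)) = 1 := dist_eq_one_iff_adj.mpr h1
    have h3 := hconn.dist_triangle (u := u) (v := p.getVert i) (w := p.getVert (i + 1))
    have h4 := ih (by omega)
    omega

private lemma dist_getVert_eq {V : Type*} {G : SimpleGraph V} (hconn : G.Connected)
    {u v : V} (p : G.Walk u v) (hp : p.length = G.dist u v) {i : ℕ} (hi : i ≤ p.length) :
    G.dist u (p.getVert i) = i := by
  have hle := dist_getVert_le' hconn p i hi
  have hrev : G.dist v (p.getVert i) ≤ p.length - i := by
    have := dist_getVert_le' hconn p.reverse (p.length - i) (by rw [Walk.length_reverse]; omega)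
    rwa [p.getVert_reverse, Nat.sub_sub_self hi] at this
  have htri := hconn.dist_triangle (u := u) (v := p.getVert i) (w := v)
  rw [SimpleGraph.dist_comm] at hrev
  omega

/-- In a connected graph on `n` vertices with maximum degree `Δ` and diameter
`D`, the weighted distance between any two vertices is at most `min {3n, ΔD}`. -/
theorem weightedDist_le_min {V : Type*} [Fintype V]
    (G : SimpleGraph V) [DecidableRel G.Adj] (hconn : G.Connected) (u v : V) :
    weightedDist G u v ≤ min (3 * Fintype.card V) (G.maxDegree * G.diam) := by
  classical
  obtain ⟨p, hpath, hlen⟩ := hconn.exists_path_of_dist u v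
  set L := p.length with hL
  have hmem : (p.support.dropLast.map fun w => G.degree w).sum ∈
      {m | ∃ q : G.Walk u v, q.IsPath ∧
        (q.support.dropLast.map fun w => G.degree w).sum = m} := ⟨p, hpath, rfl⟩
  refine le_trans (Nat.sInf_le hmem) (le_min ?_ ?_)
  · -- 3n bound
    have hsub : (p.support.dropLast.map fun w => G.degree w).sum ≤
        (p.support.map fun w => G.degree w).sum := by
      refine List.Sublist.sum_le_sum ((List.dropLast_sublist _).map _) ?_
      intro x _; exact Nat.zero_le x
    refine hsub.trans ?_
    have hnd : p.support.Nodup := hpath.support_nodup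
    rw [← List.sum_toFinset _ hnd]
    -- double counting
    have hdeg : ∀ x : V, G.degree x = ∑ w : V, if G.Adj x w then 1 else 0 := by
      intro x
      rw [SimpleGraph.degree, neighborFinset_eq_filter, Finset.card_filter]
    calc ∑ x ∈ p.support.toFinset, G.degree x
        = ∑ x ∈ p.support.toFinset, ∑ w : V, if G.Adj x w then 1 else 0 := by
          exact Finset.sum_congr rfl fun x _ => hdeg x
      _ = ∑ w : V, ∑ x ∈ p.support.toFinset, if G.Adj x w then 1 else 0 :=
          Finset.sum_comm
      _ = ∑ w : V, (p.support.toFinset.filter fun x => G.Adj x w).card := by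
          refine Finset.sum_congr rfl fun w _ => ?_
          rw [Finset.card_filter]
      _ ≤ ∑ _w : V, 3 := by
          refine Finset.sum_le_sum fun w _ => ?_
          -- at most 3 vertices of a shortest path are adjacent to w
          set T := p.support.toFinset.filter (fun x => G.Adj x w) with hT
          set I := (Finset.range (L + 1)).filter (fun i => G.Adj (p.getVert i) w) with hI
          have hTI : T ⊆ I.image p.getVert := by
            intro x hx
            rw [hT, Finset.mem_filter, List.mem_toFinset] at hx
            obtain ⟨n, hn, hnL⟩ := Walk.mem_support_iff_exists_getVert.mp hx.1
            refine Finset.mem_image.mpr ⟨n, ?_, hn⟩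
            rw [hI, Finset.mem_filter, Finset.mem_range]
            exact ⟨by omega, by rw [hn]; exact hx.2⟩
          refine (Finset.card_le_card hTI).trans
            ((Finset.card_image_le).trans ?_)
          rcases Finset.eq_empty_or_nonempty I with h | h
          · simp [h]
          · set m := I.min' h with hm
            have hIcc : I ⊆ Finset.Icc m (m + 2) := by
              intro j hj
              have hmj : m ≤ j := I.min'_le j hj
              have hmI : m ∈ I := I.min'_mem h
              rw [hI, Finset.mem_filter, Finset.mem_range] at hj hmI
              -- j = dist u x_j ≤ dist u x_m + 2
              have hdj : G.dist u (p.getVert j) = j :=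
                dist_getVert_eq hconn p hlen (by omega)
              have hdm : G.dist u (p.getVert m) = m :=
                dist_getVert_eq hconn p hlen (by omega)
              have h1 : G.dist (p.getVert m) w = 1 := dist_eq_one_iff_adj.mpr hmI.2
              have h2 : G.dist w (p.getVert j) = 1 :=
                dist_eq_one_iff_adj.mpr hj.2.symm
              have t1 := hconn.dist_triangle (u := u) (v := p.getVert m) (w := p.getVert j)
              have t2 := hconn.dist_triangle (u := p.getVert m) (v := w) (w := p.getVert j)
              rw [Finset.mem_Icc]
              omega
            calc I.card ≤ (Finset.Icc m (m + 2)).card := Finset.card_le_card hIcc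
              _ = 3 := by rw [Nat.card_Icc]; omega
      _ = 3 * Fintype.card V := by
          rw [Finset.sum_const, Finset.card_univ, smul_eq_mul, mul_comm]
  · -- ΔD bound
    have hlen' : p.support.dropLast.length = L := by
      have := p.length_support
      have hne : p.support ≠ [] := p.support_ne_nil
      rw [List.length_dropLast, this, hL]
      omega
    calc (p.support.dropLast.map fun w => G.degree w).sum
        ≤ (p.support.dropLast.map fun w => G.degree w).length • G.maxDegree := by
          refine List.sum_le_card_nsmul _ _ ?_
          intro x hx
          obtain ⟨y, _, rfl⟩ := List.mem_map.mp hx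
          exact G.degree_le_maxDegree y
      _ = L * G.maxDegree := by rw [List.length_map, hlen', smul_eq_mul]
      _ = G.maxDegree * L := mul_comm _ _
      _ ≤ G.maxDegree * G.diam := by
          refine Nat.mul_le_mul_left _ ?_
          have : Nonempty V := hconn.nonempty
          have hne : G.ediam ≠ ⊤ := by
            obtain ⟨a, b, hab⟩ := exists_edist_eq_ediam_of_finite (G := G)
            rw [← hab]
            exact edist_ne_top_iff_reachable.mpr (hconn a b)
          have hd : G.dist u v ≤ G.diam := dist_le_diam hne
          omega
end

section
/- Round robin routing correctness (abstract pipelining lemma): Consider a synchronous protocol on a connected graph G where k totally ordered messages are initially distributed among nodes, each node u contacts each neighbor at least once in every window of Δ_u consecutive rounds (Δ_u = degree of u), and whenever node u contacts a neighbor it forwards the smallest message it knows that it has not yet sent to that neighbor. Then for all nodes u, v, every message m initially at u, and every integer i ≥ 0: at time dist(u,v) + Δ·i, node v knows either m or at least i+1 messages smaller than m, where dist(u,v) = min over u–v paths P of ∑_{w ∈ P \ {v}} deg(w) and Δ is the maximum degree. -/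
lemma weightedDist_le {V : Type*} [Fintype V]
    (G : SimpleGraph V) [DecidableRel G.Adj] {u v : V} (p : G.Walk u v) (hp : p.IsPath) :
    weightedDist G u v ≤ (p.support.dropLast.map fun w => G.degree w).sum :=
  Nat.sInf_le ⟨p, hp, rfl⟩

lemma exists_pred {V : Type*} [Fintype V]
    (G : SimpleGraph V) [DecidableRel G.Adj] (hconn : G.Connected) (u v : V) (hne : v ≠ u) :
    ∃ w, G.Adj w v ∧ weightedDist G u w + G.degree w ≤ weightedDist G u v := by
  classical
  obtain ⟨p0⟩ := hconn u v
  have hne' : {m | ∃ p : G.Walk u v, p.IsPath ∧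
      (p.support.dropLast.map fun w => G.degree w).sum = m}.Nonempty :=
    ⟨_, p0.bypass, p0.bypass_isPath, rfl⟩
  obtain ⟨p, hp, hpsum⟩ := Nat.sInf_mem hne'
  have hnil : ¬ p.reverse.Nil := by
    rw [SimpleGraph.Walk.not_nil_iff_lt_length]
    simp only [SimpleGraph.Walk.length_reverse]
    rcases p with _ | _
    · exact absurd rfl hne
    · simp
  obtain ⟨w, h, q, hq⟩ := SimpleGraph.Walk.not_nil_iff.mp hnil
  have hpq : p = q.reverse.concat h.symm := by
    have := congrArg SimpleGraph.Walk.reverse hq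
    simpa [SimpleGraph.Walk.reverse_cons, SimpleGraph.Walk.concat_eq_append] using this
  refine ⟨w, h.symm, ?_⟩
  have hqpath : q.reverse.IsPath := by
    have := hp
    rw [hpq, SimpleGraph.Walk.concat_eq_append] at this
    exact this.of_append_left
  have hsupp : p.support.dropLast = q.reverse.support := by
    rw [hpq, SimpleGraph.Walk.support_concat,
      List.dropLast_concat]
  have hsplit : q.reverse.support = q.reverse.support.dropLast ++ [w] := by
    conv_lhs => rw [← List.dropLast_append_getLast (SimpleGraph.Walk.support_ne_nil q.reverse)]
    rw [SimpleGraph.Walk.getLast_support]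
  calc weightedDist G u w + G.degree w
      ≤ (q.reverse.support.dropLast.map fun x => G.degree x).sum + G.degree w :=
        Nat.add_le_add_right (weightedDist_le G q.reverse hqpath) _
    _ = (q.reverse.support.map fun x => G.degree x).sum := by
        conv_rhs => rw [hsplit]
        simp
    _ = weightedDist G u v := by rw [← hsupp, hpsum]; rfl

/-- Abstract pipelining lemma for round robin routing.  `K t v m` means node
`v` knows message `m` at time `t`; `S t u v m` means `u` forwards `m` to its
neighbor `v` in round `t`; `init m` is the node initially holding `m`.  Each
node `u` contacts each neighbor at least once in every window of `deg u`
rounds, and upon contact forwards the smallest known message not yet sent to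
that neighbor.  Then at time `dist(u,v) + Δ·i` node `v` knows `m` (initially at
`u = init m`) or at least `i+1` messages smaller than `m`. -/
theorem round_robin_pipelining {V M : Type*} [Fintype V] [Fintype M]
    [LinearOrder M]
    (G : SimpleGraph V) [DecidableRel G.Adj] (hconn : G.Connected)
    (K : ℕ → V → M → Prop) (S : ℕ → V → V → M → Prop) (init : M → V)
    -- initially, the owner of each message knows it
    (hinit : ∀ m, K 0 (init m) m)
    -- knowledge persists
    (hmono : ∀ t v m, K t v m → K (t + 1) v m)
    -- a forwarded message is known to the recipient in the next round
    (hrecv : ∀ t u v m, S t u v m → K (t + 1) v m)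
    -- only known messages are forwarded, and only along edges
    (hsend : ∀ t u v m, S t u v m → K t u m ∧ G.Adj u v)
    -- schedule and greedy choice: within every window of `deg u` rounds, `u`
    -- contacts each neighbor `v` and then sends the smallest message it knows
    -- and has not yet sent to `v` (so any unsent known `m` is dominated by the
    (hsched : ∀ u v, G.Adj u v → ∀ t : ℕ, ∃ t', t ≤ t' ∧ t' < t + G.degree u ∧
      ∀ m, K t' u m → (∀ s, s ≤ t' → ¬ S s u v m) →
        ∃ m', m' ≤ m ∧ S t' u v m' ∧ ∀ s, s < t' → ¬ S s u v m') :
    ∀ (m : M) (v : V) (i : ℕ),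
      K (weightedDist G (init m) v + G.maxDegree * i) v m ∨
      ∃ A : Finset M, i + 1 ≤ A.card ∧ ∀ m' ∈ A,
        m' < m ∧ K (weightedDist G (init m) v + G.maxDegree * i) v m' := by
  classical
  have Kle : ∀ {t t'} (v : V) (m : M), t ≤ t' → K t v m → K t' v m := by
    intro t t' v m h hk
    obtain ⟨k, rfl⟩ := Nat.exists_eq_add_of_le h
    clear h
    induction k with
    | zero => simpa using hk
    | succ n ih => exact (by rw [← Nat.add_assoc]; exact hmono _ _ _ ih)
  suffices H : ∀ n (m : M) (v : V), weightedDist G (init m) v ≤ n → ∀ i,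
      K (weightedDist G (init m) v + G.maxDegree * i) v m ∨
      ∃ A : Finset M, i + 1 ≤ A.card ∧ ∀ m' ∈ A,
        m' < m ∧ K (weightedDist G (init m) v + G.maxDegree * i) v m' by
    intro m v i; exact H _ m v le_rfl i
  intro n
  induction n using Nat.strong_induction_on with
  | _ n IH =>
    intro m v hdv i
    by_cases hvu : v = init m
    · left; subst hvu; exact Kle _ m (Nat.zero_le _) (hinit m)
    · obtain ⟨w, hadj, hkey⟩ := exists_pred G hconn (init m) v hvu
      set d' := weightedDist G (init m) w with hd'
      set T := weightedDist G (init m) v + G.maxDegree * i with hT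
      have hdegw : 1 ≤ G.degree w := by
        rw [Nat.one_le_iff_ne_zero, ← Nat.pos_iff_ne_zero]
        exact G.degree_pos_iff_exists_adj w |>.mpr ⟨v, hadj⟩
      have hΔ : G.degree w ≤ G.maxDegree := G.degree_le_maxDegree w
      choose f hf1 hf2 hf3 using fun j => hsched w v hadj (d' + G.maxDegree * j)
      have hfmono : ∀ {j l : ℕ}, j < l → f j < f l := by
        intro j l hjl
        calc f j < d' + G.maxDegree * j + G.degree w := hf2 j
          _ ≤ d' + G.maxDegree * l := by
            have : G.maxDegree * j + G.maxDegree ≤ G.maxDegree * l := by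
              rw [← Nat.mul_succ]; exact Nat.mul_le_mul_left _ hjl
            omega
          _ ≤ f l := hf1 l
      have hfT : ∀ j ≤ i, f j + 1 ≤ T := by
        intro j hj
        have h1 := hf2 j
        have h2 : G.maxDegree * j ≤ G.maxDegree * i := Nat.mul_le_mul_left _ hj
        omega
      by_cases hKm : K T v m
      · left; exact hKm
      · right
        have hnm : ∀ s, s < T → ¬ S s w v m := fun s hs hS =>
          hKm (Kle v m (by omega) (hrecv _ _ _ _ hS))
        have step : ∀ j ≤ i,
            (∃ m0, m0 < m ∧ S (f j) w v m0 ∧ (∀ s, s < f j → ¬ S s w v m0)) ∨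
            (∃ B : Finset M, j + 1 ≤ B.card ∧
              ∀ b ∈ B, b < m ∧ ∃ s, s ≤ f j ∧ S s w v b) := by
          intro j hj
          have hd'n : d' < n := by omega
          rcases IH d' hd'n m w le_rfl j with hKw | ⟨B, hB, hBall⟩
          · have h1 : K (f j) w m := Kle w m (hf1 j) hKw
            have h2 : ∀ s, s ≤ f j → ¬ S s w v m := fun s hs =>
              hnm s (lt_of_le_of_lt hs (by have := hfT j hj; omega))
            obtain ⟨m', hm'le, hm'S, hm'new⟩ := hf3 j m h1 h2
            left
            refine ⟨m', lt_of_le_of_ne hm'le ?_, hm'S, hm'new⟩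
            rintro rfl; exact h2 _ le_rfl hm'S
          · by_cases hall : ∀ b ∈ B, ∃ s, s ≤ f j ∧ S s w v b
            · right; exact ⟨B, hB, fun b hb => ⟨(hBall b hb).1, hall b hb⟩⟩
            · push_neg at hall
              obtain ⟨b, hbB, hbuns⟩ := hall
              have hKb : K (f j) w b := Kle w b (hf1 j) (hBall b hbB).2
              obtain ⟨m', hle, hS, hnew⟩ := hf3 j b hKb
                (fun s hs hSs => hbuns s hs hSs)
              left
              exact ⟨m', lt_of_le_of_lt hle (hBall b hbB).1, hS, hnew⟩
        have main : ∀ j ≤ i, ∃ A : Finset M, j + 1 ≤ A.card ∧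
            ∀ b ∈ A, b < m ∧ ∃ s, s ≤ f j ∧ S s w v b := by
          intro j
          induction j with
          | zero =>
            intro h0
            rcases step 0 h0 with ⟨m0, h1, h2, _⟩ | ⟨B, hB, hBall⟩
            · exact ⟨{m0}, by simp, by
                intro b hb; rw [Finset.mem_singleton] at hb; subst hb
                exact ⟨h1, f 0, le_rfl, h2⟩⟩
            · exact ⟨B, hB, hBall⟩
          | succ j ihj =>
            intro hji
            rcases step (j + 1) hji with ⟨m0, h1, h2, h3⟩ | ⟨B, hB, hBall⟩
            · obtain ⟨A, hAcard, hAall⟩ := ihj (by omega)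
              have hm0A : m0 ∉ A := by
                intro hmem
                obtain ⟨_, s, hs, hS⟩ := hAall m0 hmem
                exact h3 s (lt_of_le_of_lt hs (hfmono (Nat.lt_succ_self j))) hS
              refine ⟨insert m0 A, ?_, ?_⟩
              · rw [Finset.card_insert_of_notMem hm0A]; omega
              · intro b hb
                rcases Finset.mem_insert.mp hb with rfl | hbA
                · exact ⟨h1, f (j + 1), le_rfl, h2⟩
                · obtain ⟨hblt, s, hs, hS⟩ := hAall b hbA
                  exact ⟨hblt, s, le_of_lt (lt_of_le_of_lt hs
                    (hfmono (Nat.lt_succ_self j))), hS⟩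
            · exact ⟨B, hB, hBall⟩
        obtain ⟨A, hc, hall⟩ := main i le_rfl
        refine ⟨A, hc, fun m' hm' => ⟨(hall m' hm').1, ?_⟩⟩
        obtain ⟨_, s, hs, hS⟩ := hall m' hm'
        exact Kle v m' (by have := hfT i le_rfl; omega) (hrecv _ _ _ _ hS)
end

section
/- Round robin routing disseminates all k messages in at most min{3n, ΔD} + Δk rounds: under the protocol where each node u contacts every neighbor at least once every Δ_u rounds and forwards messages without repetition to the same neighbor, after min{3n, ΔD} + Δk rounds every node knows all k messages. -/
open SimpleGraph

private lemma rr_dist_start_getVert {V : Type*} {G : SimpleGraph V} (hc : G.Connected)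
    {w v : V} (p : G.Walk w v) (i : ℕ) : G.dist w (p.getVert i) ≤ i := by
  induction p generalizing i with
  | nil =>
    rw [SimpleGraph.Walk.getVert_of_length_le _ (Nat.zero_le i),
      SimpleGraph.dist_self]
    exact Nat.zero_le i
  | @cons a b c h q ih =>
    cases i with
    | zero => simp
    | succ i =>
      rw [SimpleGraph.Walk.getVert_cons_succ]
      have h1 : G.dist a (q.getVert i) ≤ G.dist a b + G.dist b (q.getVert i) :=
        hc.dist_triangle
      have h2 : G.dist a b = 1 := SimpleGraph.dist_eq_one_iff_adj.mpr h
      have h3 := ih i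
      omega

private lemma rr_dist_getVert_end {V : Type*} {G : SimpleGraph V} (hc : G.Connected)
    {w v : V} (p : G.Walk w v) (j : ℕ) : G.dist (p.getVert j) v ≤ p.length - j := by
  induction p generalizing j with
  | nil =>
    rw [SimpleGraph.Walk.getVert_of_length_le _ (Nat.zero_le j)]
    simp
  | @cons a b c h q ih =>
    cases j with
    | zero =>
      simpa using SimpleGraph.dist_le (SimpleGraph.Walk.cons h q)
    | succ j =>
      rw [SimpleGraph.Walk.getVert_cons_succ]
      have := ih j
      simpa [SimpleGraph.Walk.length_cons] using this

private lemma rr_shortest_spread {V : Type*} {G : SimpleGraph V} (hc : G.Connected)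
    {w v : V} (p : G.Walk w v) (hp : p.length = G.dist w v) {i j : ℕ}
    (hij : i ≤ j) (hj : j ≤ p.length) :
    j ≤ i + G.dist (p.getVert i) (p.getVert j) := by
  have h1 := rr_dist_start_getVert hc p i
  have h2 := rr_dist_getVert_end hc p j
  have h3 : G.dist w v ≤ G.dist w (p.getVert i) + G.dist (p.getVert i) v :=
    hc.dist_triangle
  have h4 : G.dist (p.getVert i) v ≤
      G.dist (p.getVert i) (p.getVert j) + G.dist (p.getVert j) v := hc.dist_triangle
  omega

private lemma rr_sum_deg_le {V : Type*} [Fintype V] {G : SimpleGraph V} [DecidableRel G.Adj]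
    (hc : G.Connected) {w v : V} (p : G.Walk w v) (hp : p.length = G.dist w v) :
    ∑ l ∈ Finset.range p.length, G.degree (p.getVert l) ≤ 3 * Fintype.card V := by
  classical
  have key : ∀ x : V,
      ((Finset.range p.length).filter (fun l => G.Adj (p.getVert l) x)).card ≤ 3 := by
    intro x
    set F := (Finset.range p.length).filter (fun l => G.Adj (p.getVert l) x) with hF
    rcases F.eq_empty_or_nonempty with h | h
    · simp [h]
    · have hsub : F ⊆ Finset.Icc (F.min' h) (F.min' h + 2) := by
        intro l hl
        have hal : F.min' h ≤ l := F.min'_le l hl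
        have hmin := Finset.mem_filter.mp (F.min'_mem h)
        have hl := Finset.mem_filter.mp hl
        rw [Finset.mem_range] at hl hmin
        have e1 : G.dist (p.getVert (F.min' h)) x = 1 :=
          SimpleGraph.dist_eq_one_iff_adj.mpr hmin.2
        have e2 : G.dist x (p.getVert l) = 1 :=
          SimpleGraph.dist_eq_one_iff_adj.mpr hl.2.symm
        have hd : G.dist (p.getVert (F.min' h)) (p.getVert l) ≤ 2 := by
          have := hc.dist_triangle (u := p.getVert (F.min' h)) (v := x) (w := p.getVert l)
          omega
        have hspread := rr_shortest_spread hc p hp hal (le_of_lt hl.1)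
        rw [Finset.mem_Icc]
        omega
      calc F.card ≤ (Finset.Icc (F.min' h) (F.min' h + 2)).card := Finset.card_le_card hsub
        _ = 3 := by rw [Nat.card_Icc]; omega
  calc ∑ l ∈ Finset.range p.length, G.degree (p.getVert l)
      = ∑ l ∈ Finset.range p.length,
          ((Finset.univ.filter (fun x => G.Adj (p.getVert l) x)).card) := by
        refine Finset.sum_congr rfl fun l _ => ?_
        rw [SimpleGraph.degree, SimpleGraph.neighborFinset_eq_filter]
    _ = ∑ l ∈ Finset.range p.length, ∑ x : V, (if G.Adj (p.getVert l) x then 1 else 0) :=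
        Finset.sum_congr rfl fun l _ => Finset.card_filter _ _
    _ = ∑ x : V, ∑ l ∈ Finset.range p.length, (if G.Adj (p.getVert l) x then 1 else 0) :=
        Finset.sum_comm
    _ = ∑ x : V, ((Finset.range p.length).filter (fun l => G.Adj (p.getVert l) x)).card :=
        Finset.sum_congr rfl fun x _ => (Finset.card_filter _ _).symm
    _ ≤ ∑ _x : V, 3 := Finset.sum_le_sum fun x _ => key x
    _ = 3 * Fintype.card V := by simp [Finset.sum_const, smul_eq_mul, mul_comm]
/-- Round robin routing disseminates all `k` messages within
`min {3n, ΔD} + Δk` rounds.  `K t v m` means node `v` knows message `m` at time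
`t`; `S t u v m` means `u` forwards `m` to its neighbor `v` in round `t`;
`init m` is the node initially holding `m`; there are `k` messages in total.
Each node `u` contacts each neighbor at least once in every window of `deg u`
rounds and forwards messages without repetition to the same neighbor (sending
the smallest not-yet-sent known message). -/
theorem round_robin_dissemination {V M : Type*} [Fintype V] [Fintype M]
    [LinearOrder M]
    (G : SimpleGraph V) [DecidableRel G.Adj] (hconn : G.Connected)
    (K : ℕ → V → M → Prop) (S : ℕ → V → V → M → Prop) (init : M → V)
    (hinit : ∀ m, K 0 (init m) m)
    (hmono : ∀ t v m, K t v m → K (t + 1) v m)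
    (hrecv : ∀ t u v m, S t u v m → K (t + 1) v m)
    (hsend : ∀ t u v m, S t u v m → K t u m ∧ G.Adj u v)
    (hsched : ∀ u v, G.Adj u v → ∀ t : ℕ, ∃ t', t ≤ t' ∧ t' < t + G.degree u ∧
      ∀ m, K t' u m → (∀ s, s ≤ t' → ¬ S s u v m) →
        ∃ m', m' ≤ m ∧ S t' u v m' ∧ ∀ s, s < t' → ¬ S s u v m') :
    ∀ (v : V) (m : M),
      K (min (3 * Fintype.card V) (G.maxDegree * G.diam)
          + G.maxDegree * Fintype.card M) v m := by
  classical
  intro v m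
  -- monotonicity over ≤
  have hmono' : ∀ (t t' : ℕ) (x : V) (m' : M), t ≤ t' → K t x m' → K t' x m' := by
    intro t t' x m' h hk
    induction t', h using Nat.le_induction with
    | base => exact hk
    | succ t' _ ih => exact hmono _ _ _ ih
  -- the single-edge pipelining step
  have edge : ∀ (u v' : V), G.Adj u v' → ∀ t : ℕ,
      (∀ i, K (t + G.maxDegree * i) u m ∨ i + 1 ≤ {m' | m' < m ∧ K (t + G.maxDegree * i) u m'}.ncard) →
      ∀ i, K (t + G.degree u + G.maxDegree * i) v' m ∨
        i + 1 ≤ {m' | m' < m ∧ K (t + G.degree u + G.maxDegree * i) v' m'}.ncard := by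
    intro u v' hadj t hu
    have hdeg : G.degree u ≤ G.maxDegree := G.degree_le_maxDegree u
    -- "sent" version of the claim
    have core : ∀ i : ℕ,
        (∃ s, s < t + G.degree u + G.maxDegree * i ∧ S s u v' m) ∨
        (∃ m' t'', m' < m ∧ t + G.maxDegree * i ≤ t'' ∧ t'' < t + G.maxDegree * i + G.degree u ∧
          S t'' u v' m' ∧ (∀ s, s < t'' → ¬ S s u v' m')) ∨
        (i + 1 ≤ {m' | m' < m ∧ ∃ s, s < t + G.degree u + G.maxDegree * i ∧ S s u v' m'}.ncard) := by
      intro i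
      obtain ⟨t', ht1, ht2, hprop⟩ := hsched u v' hadj (t + G.maxDegree * i)
      by_cases hA : ∃ s, s ≤ t' ∧ S s u v' m
      · obtain ⟨s, hs, hS⟩ := hA
        exact Or.inl ⟨s, by omega, hS⟩
      · push_neg at hA
        have hA' : ∀ s, s ≤ t' → ¬ S s u v' m := fun s hs => hA s hs
        rcases hu i with hKm | hcard
        · obtain ⟨m', hle, hS, hfresh⟩ :=
            hprop m (hmono' _ _ _ _ ht1 hKm) hA'
          rcases lt_or_eq_of_le hle with hlt | heq
          · exact Or.inr (Or.inl ⟨m', t', hlt, ht1, ht2, hS, hfresh⟩)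
          · exact Or.inl ⟨t', by omega, heq ▸ hS⟩
        · by_cases hB : ∃ m0, m0 < m ∧ K t' u m0 ∧ ∀ s, s ≤ t' → ¬ S s u v' m0
          · obtain ⟨m0, hm0m, hm0K, hm0S⟩ := hB
            obtain ⟨m', hle, hS, hfresh⟩ := hprop m0 hm0K hm0S
            exact Or.inr (Or.inl ⟨m', t', lt_of_le_of_lt hle hm0m, ht1, ht2, hS, hfresh⟩)
          · push_neg at hB
            refine Or.inr (Or.inr ?_)
            refine le_trans hcard (Set.ncard_le_ncard ?_ (Set.toFinite _))
            rintro m' ⟨hm'm, hm'K⟩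
            obtain ⟨s, hs, hS⟩ := hB m' hm'm (hmono' _ _ _ _ ht1 hm'K)
            exact ⟨hm'm, s, by omega, hS⟩
    have sent : ∀ i : ℕ,
        (∃ s, s < t + G.degree u + G.maxDegree * i ∧ S s u v' m) ∨
        (i + 1 ≤ {m' | m' < m ∧ ∃ s, s < t + G.degree u + G.maxDegree * i ∧ S s u v' m'}.ncard) := by
      intro i
      induction i with
      | zero =>
        rcases core 0 with h | h | h
        · exact Or.inl h
        · obtain ⟨m', t'', hm'm, hge, hlt, hS, _⟩ := h
          refine Or.inr ?_
          have : ({m' | m' < m ∧ ∃ s, s < t + G.degree u + G.maxDegree * 0 ∧ S s u v' m'}).Nonempty :=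
            ⟨m', hm'm, t'', by omega, hS⟩
          exact (Set.ncard_pos (Set.toFinite _)).mpr this
        · exact Or.inr h
      | succ i ih =>
        have hE : G.maxDegree * (i + 1) = G.maxDegree * i + G.maxDegree := by ring
        rcases core (i + 1) with h | h | h
        · exact Or.inl h
        · obtain ⟨m', t'', hm'm, hge, hlt, hS, hfresh⟩ := h
          rcases ih with ⟨s, hs, hSm⟩ | hc
          · exact Or.inl ⟨s, by omega, hSm⟩
          · refine Or.inr ?_
            set B := {m'' | m'' < m ∧ ∃ s, s < t + G.degree u + G.maxDegree * i ∧ S s u v' m''} with hB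
            have hnotmem : m' ∉ B := by
              rintro ⟨-, s, hsb, hSb⟩
              exact hfresh s (by omega) hSb
            have hins : insert m' B ⊆
                {m'' | m'' < m ∧ ∃ s, s < t + G.degree u + G.maxDegree * (i + 1) ∧ S s u v' m''} := by
              rintro x (rfl | ⟨hx1, s, hs, hx2⟩)
              · exact ⟨hm'm, t'', by omega, hS⟩
              · exact ⟨hx1, s, by omega, hx2⟩
            have hcarddef := Set.ncard_insert_of_notMem hnotmem (Set.toFinite B)
            have := Set.ncard_le_ncard hins (Set.toFinite _)
            omega
        · exact Or.inr h
    intro i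
    rcases sent i with ⟨s, hs, hS⟩ | hc
    · exact Or.inl (hmono' _ _ _ _ (by omega) (hrecv _ _ _ _ hS))
    · refine Or.inr (le_trans hc (Set.ncard_le_ncard ?_ (Set.toFinite _)))
      rintro m' ⟨hm'm, s, hs, hS⟩
      exact ⟨hm'm, hmono' _ _ _ _ (by omega) (hrecv _ _ _ _ hS)⟩
  -- propagate along a walk
  have walkKC : ∀ (x y : V) (p : G.Walk x y) (t : ℕ),
      (∀ i, K (t + G.maxDegree * i) x m ∨ i + 1 ≤ {m' | m' < m ∧ K (t + G.maxDegree * i) x m'}.ncard) →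
      ∀ i, K (t + (∑ l ∈ Finset.range p.length, G.degree (p.getVert l)) + G.maxDegree * i) y m ∨
        i + 1 ≤ {m' | m' < m ∧
          K (t + (∑ l ∈ Finset.range p.length, G.degree (p.getVert l)) + G.maxDegree * i) y m'}.ncard := by
    intro x y p
    induction p with
    | nil => intro t hx i; simpa using hx i
    | @cons a b c h q ih =>
      intro t hx i
      have hstep := edge a b h t hx
      have hq := ih (t + G.degree a) hstep i
      have hsum : ∑ l ∈ Finset.range (SimpleGraph.Walk.cons h q).length,
          G.degree ((SimpleGraph.Walk.cons h q).getVert l)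
          = G.degree a + ∑ l ∈ Finset.range q.length, G.degree (q.getVert l) := by
        rw [SimpleGraph.Walk.length_cons, Finset.sum_range_succ']
        simp only [SimpleGraph.Walk.getVert_cons_succ, SimpleGraph.Walk.getVert_zero]
        exact Nat.add_comm _ _
      rw [hsum, ← Nat.add_assoc]
      exact hq
  -- the shortest walk from the source
  obtain ⟨p, hp⟩ := hconn.exists_walk_length_eq_dist (init m) v
  have base : ∀ i, K (0 + G.maxDegree * i) (init m) m ∨
      i + 1 ≤ {m' | m' < m ∧ K (0 + G.maxDegree * i) (init m) m'}.ncard :=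
    fun i => Or.inl (hmono' 0 _ _ _ (Nat.zero_le _) (hinit m))
  have main := walkKC _ _ p 0 base (Fintype.card M)
  set W := ∑ l ∈ Finset.range p.length, G.degree (p.getVert l) with hW
  rcases main with h | h
  · -- bound the weight of the walk
    have hW1 : W ≤ 3 * Fintype.card V := rr_sum_deg_le hconn p hp
    have hW2 : W ≤ G.maxDegree * G.diam := by
      have h1 : W ≤ (Finset.range p.length).card • G.maxDegree :=
        Finset.sum_le_card_nsmul _ _ _ (fun l _ => G.degree_le_maxDegree _)
      have h2 : (Finset.range p.length).card • G.maxDegree = p.length * G.maxDegree := by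
        simp [smul_eq_mul]
      have hne : G.ediam ≠ ⊤ := by
        have hle : G.ediam ≤ (Fintype.card V : ℕ∞) := by
          apply SimpleGraph.ediam_le_of_edist_le
          intro a b
          obtain ⟨q⟩ := hconn.preconnected a b
          have e1 : G.edist a b ≤ ((q.toPath : G.Walk a b).length : ℕ∞) :=
            SimpleGraph.edist_le _
          have e2 : (q.toPath : G.Walk a b).length < Fintype.card V :=
            (q.toPath).2.length_lt
          exact e1.trans (by exact_mod_cast e2.le)
        exact ne_top_of_le_ne_top (ENat.coe_ne_top _) hle
      have h3 : G.dist (init m) v ≤ G.diam := SimpleGraph.dist_le_diam hne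
      calc W ≤ p.length * G.maxDegree := by omega
        _ = G.maxDegree * p.length := Nat.mul_comm _ _
        _ ≤ G.maxDegree * G.diam := Nat.mul_le_mul_left _ (by omega)
    have hmin : W ≤ min (3 * Fintype.card V) (G.maxDegree * G.diam) := le_min hW1 hW2
    exact hmono' _ _ _ _ (by omega) h
  · exfalso
    have h1 : {m' | m' < m ∧ K (0 + W + G.maxDegree * Fintype.card M) v m'}.ncard ≤ Fintype.card M := by
      have := Set.ncard_le_ncard
        (Set.subset_univ {m' | m' < m ∧ K (0 + W + G.maxDegree * Fintype.card M) v m'})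
        (Set.toFinite _)
      rwa [Set.ncard_univ, Nat.card_eq_fintype_card] at this
    omega
end
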